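/- Let G be a finite simple graph with vertex set {x_1,...,x_n} admitting an ordered matching of size t, and let k ≥ 2t − 1 be an integer. Then the induced matching number of the graph G_k is at least t. More precisely, if {{x_i, x_{t+i}} : 1 ≤ i ≤ t} is an ordered matching of G with {x_1,...,x_t} independent and {x_i, x_{t+j}} ∈ E(G) implying i ≤ j, then the set of edges {{x_{i,t+1−i}, x_{t+i,k+i−t}} : 1 ≤ i ≤ t} is an induced matching of G_k. -/

import Mathlib

/-- The graph `G_k`: its vertices are the pairs `x_{i,p}` with `1 ≤ i ≤ n` and
`1 ≤ p ≤ k` (encoded zero-based as `Fin n × Fin k`), and `x_{i,p}` is adjacent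
to `x_{j,q}` iff `{x_i,x_j} ∈ E(G)` and `p + q ≤ k + 1` (for the one-based
values of `p` and `q`). -/
def graphPower {n : ℕ} (G : SimpleGraph (Fin n)) (k : ℕ) :
    SimpleGraph (Fin n × Fin k) where
  Adj a b := G.Adj a.1 b.1 ∧ (a.2.val + 1) + (b.2.val + 1) ≤ k + 1
  symm := by
    constructor
    intro a b hab
    exact ⟨hab.1.symm, by omega⟩
  loopless := by
    constructor
    intro a ha
    exact G.loopless.irrefl a.1 ha.1

/-- `a b : Fin t → V` describe an induced matching of `H` of size `t`: the
edges `{a i, b i}` are pairwise disjoint edges of `H`, and there is no edge of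
`H` joining vertices of two distinct edges of the matching. -/
def IsInducedMatching {V : Type*} (H : SimpleGraph V) {t : ℕ} (a b : Fin t → V) : Prop :=
  (∀ i, H.Adj (a i) (b i)) ∧
  (∀ i j, i ≠ j → ({a i, b i} : Set V) ∩ ({a j, b j} : Set V) = ∅) ∧
  (∀ i j, i ≠ j → ∀ u ∈ ({a i, b i} : Set V), ∀ v ∈ ({a j, b j} : Set V), ¬ H.Adj u v)

/-- The induced matching number of a graph: the maximum size of an induced
matching. -/
noncomputable def inducedMatchingNum {V : Type*} (H : SimpleGraph V) : ℕ :=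
  sSup {t : ℕ | ∃ a b : Fin t → V, IsInducedMatching H a b}

/-- Let `G` be a graph with vertex set `{x_1,…,x_n}` admitting
an ordered matching `{{x_i, x_{t+i}} : 1 ≤ i ≤ t}` of size `t` (so that
`{x_1,…,x_t}` is independent and `{x_i, x_{t+j}} ∈ E(G)` implies `i ≤ j`), and
let `k ≥ 2t − 1`. Then the edges `{{x_{i,t+1−i}, x_{t+i,k+i−t}} : 1 ≤ i ≤ t}`
form an induced matching of `G_k`; in particular `indmatch(G_k) ≥ t`.
(All indices are encoded zero-based: the paper's vertex `x_{i,p}` is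
`(⟨i-1,_⟩, ⟨p-1,_⟩) : Fin n × Fin k`.) -/
theorem inducedMatching_of_orderedMatching (n t k : ℕ) (G : SimpleGraph (Fin n))
    (h2t : 2 * t ≤ n) (hk : 2 * t ≤ k + 1)
    (hmatch : ∀ i : Fin t,
      G.Adj ⟨i.val, by omega⟩ ⟨t + i.val, by omega⟩)
    (hindep : ∀ i j : Fin t,
      ¬ G.Adj ⟨i.val, by omega⟩ ⟨j.val, by omega⟩)
    (horder : ∀ i j : Fin t,
      G.Adj ⟨i.val, by omega⟩ ⟨t + j.val, by omega⟩ → i ≤ j) :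
    IsInducedMatching (graphPower G k)
      (fun i : Fin t =>
        (⟨⟨i.val, by omega⟩, ⟨t - 1 - i.val, by omega⟩⟩ : Fin n × Fin k))
      (fun i : Fin t =>
        (⟨⟨t + i.val, by omega⟩, ⟨k - t + i.val, by omega⟩⟩ : Fin n × Fin k)) ∧
    t ≤ inducedMatchingNum (graphPower G k) := by
  have hIM : IsInducedMatching (graphPower G k)
      (fun i : Fin t =>
        (⟨⟨i.val, by omega⟩, ⟨t - 1 - i.val, by omega⟩⟩ : Fin n × Fin k))
      (fun i : Fin t =>
        (⟨⟨t + i.val, by omega⟩, ⟨k - t + i.val, by omega⟩⟩ : Fin n × Fin k)) := by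
    refine ⟨?_, ?_, ?_⟩
    · intro i
      have hi := i.isLt
      refine ⟨hmatch i, ?_⟩
      simp only
      omega
    · intro i j hij
      have hne : i.val ≠ j.val := fun h => hij (Fin.ext h)
      have hi := i.isLt; have hj := j.isLt
      ext v
      simp only [Set.mem_inter_iff, Set.mem_insert_iff, Set.mem_singleton_iff,
        Set.mem_empty_iff_false, iff_false, Prod.ext_iff, Fin.ext_iff]
      rintro ⟨h1 | h1, h2 | h2⟩ <;> omega
    · intro i j hij u hu v hv hadj
      have hne : i.val ≠ j.val := fun h => hij (Fin.ext h)
      have hi := i.isLt; have hj := j.isLt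
      simp only [Set.mem_insert_iff, Set.mem_singleton_iff] at hu hv
      rcases hu with rfl | rfl <;> rcases hv with rfl | rfl
      · exact hindep i j hadj.1
      · have := horder i j hadj.1
        have hle : i.val ≤ j.val := this
        have := hadj.2
        simp only at this
        omega
      · have := horder j i hadj.1.symm
        have hle : j.val ≤ i.val := this
        have := hadj.2
        simp only at this
        omega
      · have := hadj.2
        simp only at this
        omega
  refine ⟨hIM, ?_⟩
  have hbdd : BddAbove {m : ℕ | ∃ a b : Fin m → Fin n × Fin k,
      IsInducedMatching (graphPower G k) a b} := by
    refine ⟨n * k, ?_⟩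
    rintro m ⟨a, b, hm⟩
    have hinj : Function.Injective a := by
      intro i j hij
      by_contra hne
      have h0 := hm.2.1 i j hne
      have h1 : a i ∈ ({a i, b i} : Set (Fin n × Fin k)) ∩ {a j, b j} :=
        ⟨Set.mem_insert _ _, hij ▸ Set.mem_insert _ _⟩
      rw [h0] at h1
      exact h1
    calc m = Fintype.card (Fin m) := (Fintype.card_fin m).symm
      _ ≤ Fintype.card (Fin n × Fin k) := Fintype.card_le_of_injective a hinj
      _ = n * k := by simp
  exact le_csSup hbdd ⟨_, _, hIM⟩
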